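/- Let k be a field, n ≥ 1, and a₁,…,aₙ ≥ 1 integers. For each i let Vᵢ be a k-vector space of dimension aᵢ+1 and let fᵢ : Vᵢ → k be a nonzero linear functional. Let V = V₁ ⊗ ⋯ ⊗ Vₙ and let Λ ⊆ V be the linear span of all simple tensors v₁ ⊗ ⋯ ⊗ vₙ such that fᵢ(vᵢ) = 0 for at least two indices i. Let F : V → k be the linear functional determined by F(v₁⊗⋯⊗vₙ) = f₁(v₁)⋯fₙ(vₙ). Then: (1) Λ has codimension 1 + a₁ + ⋯ + aₙ in V; (2) Λ ⊆ ker F, so F induces a functional F̄ on V/Λ; and (3) the map sending a tuple ([v₁],…,[vₙ]) of projective points with fᵢ(vᵢ) ≠ 0 for all i to the class of (v₁⊗⋯⊗vₙ mod Λ) in the projectivization ℙ(V/Λ) is a well-defined bijection from the open chart {([v₁],…,[vₙ]) ∈ ∏ᵢ ℙ(Vᵢ) : fᵢ(vᵢ) ≠ 0 for all i} onto the chart {[w] ∈ ℙ(V/Λ) : F̄(w) ≠ 0}. (This expresses that the linear projection of the Segre variety S = ℙ^{a₁}×⋯×ℙ^{aₙ} from the projective span L of the union of the subvarieties 𝒫_{ij}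 = ℙ^{a₁}×⋯×H_i×⋯×H_j×⋯×ℙ^{aₙ}, where H_i is the hyperplane fᵢ = 0, is a birational map onto ℙ^{a₁+⋯+aₙ}.) -/

import Mathlib

open Module

lemma exists_adapted {k : Type} [Field k] {V : Type} [AddCommGroup V] [Module k V]
    [FiniteDimensional k V] {a : ℕ} (hdim : finrank k V = a + 1)
    (f : V →ₗ[k] k) (hf : f ≠ 0) :
    ∃ (u : V) (e : Fin a → V) (coord : V →ₗ[k] (Fin a → k)),
      f u = 1 ∧ (∀ j, f (e j) = 0) ∧
      (∀ j j', coord (e j') j = if j = j' then 1 else 0) ∧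
      coord u = 0 ∧
      (∀ v : V, v = f v • u + ∑ j, coord v j • e j) := by
  obtain ⟨v₀, hv₀⟩ : ∃ v, f v ≠ 0 := by
    by_contra h
    push_neg at h
    exact hf (LinearMap.ext fun v => h v)
  set u : V := (f v₀)⁻¹ • v₀ with hu_def
  have hu : f u = 1 := by simp [hu_def, inv_mul_cancel₀ hv₀]
  have hsurj : Function.Surjective f := fun c => ⟨c • u, by simp [hu]⟩
  have hrk : finrank k (LinearMap.ker f) = a := by
    have h1 := LinearMap.finrank_range_add_finrank_ker f
    rw [LinearMap.range_eq_top.2 hsurj, finrank_top, finrank_self, hdim] at h1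
    omega
  have hlast : finrank k (LinearMap.ker f) = finrank k (Fin a → k) := by
    rw [hrk, Module.finrank_pi, Fintype.card_fin]
  let κ : (LinearMap.ker f) ≃ₗ[k] (Fin a → k) := LinearEquiv.ofFinrankEq _ _ hlast
  have hmem : ∀ v, v - f v • u ∈ LinearMap.ker f := by
    intro v
    simp only [LinearMap.mem_ker, map_sub, map_smul, hu, smul_eq_mul, mul_one, sub_self]
  set p : V →ₗ[k] (LinearMap.ker f) :=
    (LinearMap.id - f.smulRight u).codRestrict (LinearMap.ker f) hmem with hp_def
  have hp : ∀ v, (p v : V) = v - f v • u := fun v => rfl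
  set coord : V →ₗ[k] (Fin a → k) := κ.toLinearMap.comp p with hcoord_def
  set e : Fin a → V := fun j => (κ.symm (Pi.single j 1) : LinearMap.ker f) with he_def
  have hfe : ∀ j, f (e j) = 0 := fun j => (κ.symm (Pi.single j 1)).2
  have hpe : ∀ j, p (e j) = κ.symm (Pi.single j 1) := by
    intro j
    ext
    simp [hp, he_def, hfe]
  refine ⟨u, e, coord, hu, hfe, ?_, ?_, ?_⟩
  · intro j j'
    simp [hcoord_def, hpe, Pi.single_apply]
  · have hpu : p u = 0 := by
      ext
      simp [hp, hu]
    simp [hcoord_def, hpu]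
  · intro v
    have : ((p v : LinearMap.ker f) : V) = ∑ j, coord v j • e j := by
      have h1 : (p v : LinearMap.ker f) = κ.symm (coord v) := by simp [hcoord_def]
      have h2 : coord v = ∑ j, (coord v j) • (Pi.single j 1 : Fin a → k) := by
        ext j'
        simp [Pi.single_apply]
      have h3 : κ.symm (coord v) = ∑ j, coord v j • κ.symm (Pi.single j 1) := by
        conv_lhs => rw [h2]
        rw [map_sum]
        simp only [map_smul]
      rw [h1, h3]
      push_cast
      rfl
    rw [hp] at this
    rw [← this]
    abel

open PiTensorProduct
open scoped TensorProduct

section Segre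
variable {k : Type} [Field k] {n : ℕ} {a : Fin n → ℕ}
  {V : Fin n → Type} [∀ i, AddCommGroup (V i)] [∀ i, Module k (V i)]

/-- The coordinate map on the tensor product: total functional `F` together with the
"one kernel coordinate" functionals. -/
noncomputable def SegrePhi (f : ∀ i, V i →ₗ[k] k)
    (coord : ∀ i, V i →ₗ[k] (Fin (a i) → k)) :
    (⨂[k] i, V i) →ₗ[k] k × (∀ i, Fin (a i) → k) :=
  LinearMap.prod
    (PiTensorProduct.lift ((MultilinearMap.mkPiAlgebra k (Fin n) k).compLinearMap f))
    (LinearMap.pi fun i => LinearMap.pi fun j =>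
      PiTensorProduct.lift ((MultilinearMap.mkPiAlgebra k (Fin n) k).compLinearMap
        (Function.update f i ((LinearMap.proj j).comp (coord i)))))

lemma prod_update_apply (f : ∀ i, V i →ₗ[k] k) (i : Fin n) (φ : V i →ₗ[k] k)
    (v : ∀ i, V i) :
    ∏ m, (Function.update f i φ m) (v m)
      = φ (v i) * ∏ m ∈ Finset.univ.erase i, f m (v m) := by
  have h : (fun m => (Function.update f i φ m) (v m))
      = Function.update (fun m => f m (v m)) i (φ (v i)) := by
    ext m
    rcases eq_or_ne m i with rfl | h
    · simp
    · simp [Function.update_of_ne h]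
  rw [h, Finset.prod_update_of_mem (Finset.mem_univ i), Finset.sdiff_singleton_eq_erase]

lemma SegrePhi_tprod (f : ∀ i, V i →ₗ[k] k)
    (coord : ∀ i, V i →ₗ[k] (Fin (a i) → k)) (v : ∀ i, V i) :
    SegrePhi f coord (⨂ₜ[k] i, v i) =
      (∏ m, f m (v m),
       fun i j => coord i (v i) j * ∏ m ∈ Finset.univ.erase i, f m (v m)) := by
  unfold SegrePhi
  refine Prod.ext ?_ ?_
  · simp [MultilinearMap.mkPiAlgebra_apply]
  · funext i j
    simp only [LinearMap.prod_apply, Function.prod, LinearMap.pi_apply, lift.tprod,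
      MultilinearMap.compLinearMap_apply, MultilinearMap.mkPiAlgebra_apply]
    rw [prod_update_apply]
    rfl

variable {k : Type} [Field k] {n : ℕ} {a : Fin n → ℕ}
  {V : Fin n → Type} [∀ i, AddCommGroup (V i)] [∀ i, Module k (V i)]

/-- A linear section of the coordinate map `SegrePhi`. -/
noncomputable def SegreSec (u : ∀ i, V i) (e : ∀ i, Fin (a i) → V i) :
    (k × (∀ i, Fin (a i) → k)) →ₗ[k] ⨂[k] i, V i :=
  (LinearMap.fst k k _).smulRight (⨂ₜ[k] i, u i) +
    ∑ i, ∑ j,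
      ((LinearMap.proj j).comp ((LinearMap.proj i).comp
        (LinearMap.snd k k (∀ i, Fin (a i) → k)))).smulRight
        (⨂ₜ[k] m, Function.update u i (e i j) m)

lemma SegreSec_apply (u : ∀ i, V i) (e : ∀ i, Fin (a i) → V i) (c : k)
    (g : ∀ i, Fin (a i) → k) :
    SegreSec u e (c, g) = c • (⨂ₜ[k] i, u i) +
      ∑ i, ∑ j, g i j • (⨂ₜ[k] m, Function.update u i (e i j) m) := by
  simp [SegreSec, LinearMap.sum_apply]


lemma tprod_sub_sec_mem
    (f : ∀ i, V i →ₗ[k] k) (u : ∀ i, V i) (e : ∀ i, Fin (a i) → V i)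
    (coord : ∀ i, V i →ₗ[k] (Fin (a i) → k))
    (hu : ∀ i, f i (u i) = 1)
    (hrec : ∀ i w, w = f i w • u i + ∑ j, coord i w j • e i j)
    (v : ∀ i, V i) :
    (⨂ₜ[k] i, v i) - SegreSec u e (SegrePhi f coord (⨂ₜ[k] i, v i)) ∈
      Submodule.span k {w : ⨂[k] i, V i | ∃ v : ∀ i, V i,
        (∃ i j, i ≠ j ∧ f i (v i) = 0 ∧ f j (v j) = 0) ∧ w = ⨂ₜ[k] i, v i} := by
  classical
  set s : ∀ i, V i := fun i => f i (v i) • u i with hs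
  set w : ∀ i, V i := fun i => v i - f i (v i) • u i with hw
  have hfw : ∀ i, f i (w i) = 0 := by
    intro i
    simp [hw, hu i]
  have hwe : ∀ i, w i = ∑ j, coord i (v i) j • e i j := by
    intro i
    simp only [hw]
    exact sub_eq_iff_eq_add'.mpr (hrec i (v i))
  have hv_expand : (⨂ₜ[k] i, v i)
      = ∑ S : Finset (Fin n), ⨂ₜ[k] i, (S.piecewise w s i) := by
    conv_lhs => rw [show v = w + s from funext fun i => by simp [hw, hs]]
    exact (PiTensorProduct.tprod k).map_add_univ w s
  have hB : (∑ S ∈ Finset.univ.filter (fun S : Finset (Fin n) => ¬ S.card ≤ 1),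
      ⨂ₜ[k] i, (S.piecewise w s i)) ∈
      Submodule.span k {x : ⨂[k] i, V i | ∃ v : ∀ i, V i,
        (∃ i j, i ≠ j ∧ f i (v i) = 0 ∧ f j (v j) = 0) ∧ x = ⨂ₜ[k] i, v i} := by
    refine Submodule.sum_mem _ fun S hS => Submodule.subset_span ?_
    simp only [Finset.mem_filter, not_le] at hS
    obtain ⟨i, hi, j, hj, hij⟩ := Finset.one_lt_card.1 hS.2
    refine ⟨S.piecewise w s, ⟨i, j, hij, ?_, ?_⟩, rfl⟩
    · rw [S.piecewise_eq_of_mem _ _ hi]; exact hfw i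
    · rw [S.piecewise_eq_of_mem _ _ hj]; exact hfw j
  have hfilter : Finset.univ.filter (fun S : Finset (Fin n) => S.card ≤ 1)
      = insert ∅ (Finset.univ.image fun i : Fin n => ({i} : Finset (Fin n))) := by
    ext S
    simp only [Finset.mem_filter, Finset.mem_univ, true_and, Finset.mem_insert,
      Finset.mem_image]
    constructor
    · intro hS
      rcases S.eq_empty_or_nonempty with rfl | ⟨x, hx⟩
      · exact Or.inl rfl
      · exact Or.inr ⟨x, (Finset.eq_singleton_iff_unique_mem.2
          ⟨hx, fun y hy => Finset.card_le_one.1 hS y hy x hx⟩).symm⟩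
    · rintro (rfl | ⟨x, -, rfl⟩) <;> simp
  have hA : (∑ S ∈ Finset.univ.filter (fun S : Finset (Fin n) => S.card ≤ 1),
      ⨂ₜ[k] i, (S.piecewise w s i))
      = SegreSec u e (SegrePhi f coord (⨂ₜ[k] i, v i)) := by
    rw [SegrePhi_tprod, SegreSec_apply, hfilter]
    rw [Finset.sum_insert (by
      simp only [Finset.mem_image]
      rintro ⟨x, -, hx⟩
      exact Finset.singleton_ne_empty x hx)]
    rw [Finset.sum_image (fun x _ y _ h => Finset.singleton_injective h)]
    congr 1
    · rw [Finset.piecewise_empty]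
      exact ((PiTensorProduct.tprod k).map_smul_univ (fun i => f i (v i)) u)
    · refine Finset.sum_congr rfl fun i _ => ?_
      rw [Finset.piecewise_singleton]
      have h1 : Function.update s i (w i)
          = Function.update s i (∑ j, coord i (v i) j • e i j) := by rw [← hwe i]
      rw [h1, (PiTensorProduct.tprod k).map_update_sum]
      refine Finset.sum_congr rfl fun j _ => ?_
      rw [(PiTensorProduct.tprod k).map_update_smul]
      have h2 : Function.update s i (e i j)
          = fun m => (Function.update (fun m => f m (v m)) i 1 m)
              • (Function.update u i (e i j) m) := by
        ext m
        rcases eq_or_ne m i with rfl | hm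
        · simp
        · simp [Function.update_of_ne hm, hs]
      rw [h2, (PiTensorProduct.tprod k).map_smul_univ]
      rw [Finset.prod_update_of_mem (Finset.mem_univ i), one_mul,
        Finset.sdiff_singleton_eq_erase, smul_smul, mul_comm]
  have key : (⨂ₜ[k] i, v i) - SegreSec u e (SegrePhi f coord (⨂ₜ[k] i, v i))
      = ∑ S ∈ Finset.univ.filter (fun S : Finset (Fin n) => ¬ S.card ≤ 1),
          ⨂ₜ[k] i, (S.piecewise w s i) := by
    nth_rewrite 1 [hv_expand]
    rw [← Finset.sum_filter_add_sum_filter_not Finset.univ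
      (fun S : Finset (Fin n) => S.card ≤ 1), hA, add_sub_cancel_left]
  rw [key]
  exact hB

lemma sub_sec_mem
    (f : ∀ i, V i →ₗ[k] k) (u : ∀ i, V i) (e : ∀ i, Fin (a i) → V i)
    (coord : ∀ i, V i →ₗ[k] (Fin (a i) → k))
    (hu : ∀ i, f i (u i) = 1)
    (hrec : ∀ i w, w = f i w • u i + ∑ j, coord i w j • e i j)
    (t : ⨂[k] i, V i) :
    t - SegreSec u e (SegrePhi f coord t) ∈
      Submodule.span k {w : ⨂[k] i, V i | ∃ v : ∀ i, V i,
        (∃ i j, i ≠ j ∧ f i (v i) = 0 ∧ f j (v j) = 0) ∧ w = ⨂ₜ[k] i, v i} := by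
  set G : (⨂[k] i, V i) →ₗ[k] ⨂[k] i, V i :=
    LinearMap.id - (SegreSec u e).comp (SegrePhi f coord) with hG
  have hGt : ∀ t, G t = t - SegreSec u e (SegrePhi f coord t) := fun _ => rfl
  rw [← hGt]
  have ht : t ∈ Submodule.span k (Set.range (PiTensorProduct.tprod k)) := by
    rw [span_tprod_eq_top]; trivial
  refine Submodule.span_induction ?_ ?_ ?_ ?_ ht
  · rintro x ⟨v, rfl⟩
    rw [hGt]
    exact tprod_sub_sec_mem f u e coord hu hrec v
  · simp only [map_zero]
    exact Submodule.zero_mem _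
  · intro x y _ _ hx hy
    rw [map_add]
    exact Submodule.add_mem _ hx hy
  · intro c x _ hx
    rw [map_smul]
    exact Submodule.smul_mem _ c hx

lemma ker_SegrePhi_eq_span
    (f : ∀ i, V i →ₗ[k] k) (u : ∀ i, V i) (e : ∀ i, Fin (a i) → V i)
    (coord : ∀ i, V i →ₗ[k] (Fin (a i) → k))
    (hu : ∀ i, f i (u i) = 1)
    (hrec : ∀ i w, w = f i w • u i + ∑ j, coord i w j • e i j) :
    Submodule.span k {w : ⨂[k] i, V i | ∃ v : ∀ i, V i,
        (∃ i j, i ≠ j ∧ f i (v i) = 0 ∧ f j (v j) = 0) ∧ w = ⨂ₜ[k] i, v i}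
      = LinearMap.ker (SegrePhi f coord) := by
  apply le_antisymm
  · rw [Submodule.span_le]
    rintro x ⟨v, ⟨i, j, hij, hfi, hfj⟩, rfl⟩
    rw [SetLike.mem_coe, LinearMap.mem_ker, SegrePhi_tprod]
    refine Prod.ext ?_ ?_
    · exact Finset.prod_eq_zero (Finset.mem_univ i) hfi
    · funext i' j'
      rcases eq_or_ne i i' with rfl | hii'
      · have : j ∈ Finset.univ.erase i := Finset.mem_erase.2 ⟨hij.symm, Finset.mem_univ j⟩
        have h0 : ∏ m ∈ Finset.univ.erase i, f m (v m) = 0 :=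
          Finset.prod_eq_zero this hfj
        simp [h0]
      · have : i ∈ Finset.univ.erase i' := Finset.mem_erase.2 ⟨hii', Finset.mem_univ i⟩
        have h0 : ∏ m ∈ Finset.univ.erase i', f m (v m) = 0 :=
          Finset.prod_eq_zero this hfi
        simp [h0]
  · intro t ht
    rw [LinearMap.mem_ker] at ht
    have := sub_sec_mem f u e coord hu hrec t
    rwa [ht, map_zero, sub_zero] at this

lemma SegrePhi_T0
    (f : ∀ i, V i →ₗ[k] k) (u : ∀ i, V i)
    (coord : ∀ i, V i →ₗ[k] (Fin (a i) → k))
    (hu : ∀ i, f i (u i) = 1) (hcu : ∀ i, coord i (u i) = 0) :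
    SegrePhi f coord (⨂ₜ[k] i, u i) = (1, 0) := by
  rw [SegrePhi_tprod]
  refine Prod.ext ?_ ?_
  · show (∏ m, f m (u m)) = 1
    exact Finset.prod_eq_one fun i _ => hu i
  · dsimp only
    funext i j
    simp [hcu i]

lemma SegrePhi_Tij
    (f : ∀ i, V i →ₗ[k] k) (u : ∀ i, V i) (e : ∀ i, Fin (a i) → V i)
    (coord : ∀ i, V i →ₗ[k] (Fin (a i) → k))
    (hu : ∀ i, f i (u i) = 1) (hfe : ∀ i j, f i (e i j) = 0)
    (hce : ∀ i j j', coord i (e i j') j = if j = j' then 1 else 0)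
    (hcu : ∀ i, coord i (u i) = 0) (i : Fin n) (j : Fin (a i)) :
    SegrePhi f coord (⨂ₜ[k] m, Function.update u i (e i j) m)
      = (0, Pi.single i (Pi.single j 1)) := by
  rw [SegrePhi_tprod]
  refine Prod.ext ?_ ?_
  · show (∏ m, f m (Function.update u i (e i j) m)) = 0
    refine Finset.prod_eq_zero (Finset.mem_univ i) ?_
    rw [Function.update_self]
    exact hfe i j
  · dsimp only
    funext i' j'
    rcases eq_or_ne i' i with rfl | hii
    · rw [Function.update_self, hce, Pi.single_eq_same]
      have h1 : ∏ m ∈ Finset.univ.erase i', f m (Function.update u i' (e i' j) m) = 1 :=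
        Finset.prod_eq_one fun m hm => by
          rw [Function.update_of_ne (Finset.mem_erase.1 hm).1]; exact hu m
      rw [h1, mul_one, Pi.single_apply]
    · rw [Function.update_of_ne hii, Pi.single_eq_of_ne hii]
      simp [hcu i']

lemma SegrePhi_SegreSec
    (f : ∀ i, V i →ₗ[k] k) (u : ∀ i, V i) (e : ∀ i, Fin (a i) → V i)
    (coord : ∀ i, V i →ₗ[k] (Fin (a i) → k))
    (hu : ∀ i, f i (u i) = 1) (hfe : ∀ i j, f i (e i j) = 0)
    (hce : ∀ i j j', coord i (e i j') j = if j = j' then 1 else 0)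
    (hcu : ∀ i, coord i (u i) = 0) (c : k) (g : ∀ i, Fin (a i) → k) :
    SegrePhi f coord (SegreSec u e (c, g)) = (c, g) := by
  rw [SegreSec_apply, map_add, map_smul, SegrePhi_T0 f u coord hu hcu]
  rw [map_sum]
  simp only [map_sum, map_smul, SegrePhi_Tij f u e coord hu hfe hce hcu]
  refine Prod.ext ?_ ?_
  · simp [Prod.fst_sum]
  · funext i' j'
    simp only [Prod.snd_add, Prod.smul_snd, Prod.snd_sum, Pi.add_apply, Pi.smul_apply,
      Finset.sum_apply, smul_eq_mul, mul_zero, Prod.snd_zero]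
    rw [Finset.sum_eq_single i']
    · rw [Finset.sum_eq_single j']
      · simp
      · intro j _ hj
        rw [Pi.single_eq_same, Pi.single_eq_of_ne (Ne.symm hj)]
        simp
      · intro h
        exact absurd (Finset.mem_univ j') h
    · intro i _ hi
      refine Finset.sum_eq_zero fun j _ => ?_
      rw [Pi.single_eq_of_ne (Ne.symm hi)]
      simp
    · intro h
      exact absurd (Finset.mem_univ i') h

lemma exists_rep_smul {M : Type} [AddCommGroup M] [Module k M] (x : M) (hx : x ≠ 0) :
    ∃ d : kˣ, (Projectivization.mk k x hx).rep = d • x := by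
  obtain ⟨d, hd⟩ := (Projectivization.mk_eq_mk_iff k _ x
    (Projectivization.rep_nonzero _) hx).1 (Projectivization.mk_rep (Projectivization.mk k x hx))
  exact ⟨d, hd.symm⟩

lemma chart_mk_iff {M : Type} [AddCommGroup M] [Module k M] (G : M →ₗ[k] k) (x : M)
    (hx : x ≠ 0) :
    G (Projectivization.mk k x hx).rep ≠ 0 ↔ G x ≠ 0 := by
  obtain ⟨d, hd⟩ := exists_rep_smul (k := k) x hx
  rw [hd, Units.smul_def, map_smul, smul_eq_mul, mul_ne_zero_iff]
  exact ⟨fun h => h.2, fun h => ⟨d.ne_zero, h⟩⟩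

lemma f_reconstruct (f : ∀ i, V i →ₗ[k] k) (u : ∀ i, V i) (e : ∀ i, Fin (a i) → V i)
    (hu : ∀ i, f i (u i) = 1) (hfe : ∀ i j, f i (e i j) = 0)
    (d : ∀ i, Fin (a i) → k) (i : Fin n) :
    f i (u i + ∑ j, d i j • e i j) = 1 := by
  simp [hu i, hfe i]

lemma coord_reconstruct (u : ∀ i, V i) (e : ∀ i, Fin (a i) → V i)
    (coord : ∀ i, V i →ₗ[k] (Fin (a i) → k))
    (hce : ∀ i j j', coord i (e i j') j = if j = j' then 1 else 0)
    (hcu : ∀ i, coord i (u i) = 0)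
    (d : ∀ i, Fin (a i) → k) (i : Fin n) (j : Fin (a i)) :
    coord i (u i + ∑ j', d i j' • e i j') j = d i j := by
  rw [map_add, map_sum]
  simp only [map_smul, Pi.add_apply, Finset.sum_apply, Pi.smul_apply, hcu i, Pi.zero_apply,
    zero_add, hce, smul_eq_mul, mul_ite, mul_one, mul_zero]
  simp

lemma SegrePhi_reconstruct (f : ∀ i, V i →ₗ[k] k) (u : ∀ i, V i) (e : ∀ i, Fin (a i) → V i)
    (coord : ∀ i, V i →ₗ[k] (Fin (a i) → k))
    (hu : ∀ i, f i (u i) = 1) (hfe : ∀ i j, f i (e i j) = 0)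
    (hce : ∀ i j j', coord i (e i j') j = if j = j' then 1 else 0)
    (hcu : ∀ i, coord i (u i) = 0)
    (d : ∀ i, Fin (a i) → k) :
    SegrePhi f coord (⨂ₜ[k] i, (u i + ∑ j, d i j • e i j)) = (1, d) := by
  rw [SegrePhi_tprod]
  refine Prod.ext ?_ ?_
  · show (∏ m, f m (u m + ∑ j, d m j • e m j)) = 1
    exact Finset.prod_eq_one fun m _ => f_reconstruct f u e hu hfe d m
  · dsimp only
    funext i j
    rw [coord_reconstruct u e coord hce hcu d i j]
    rw [Finset.prod_eq_one fun m _ => f_reconstruct f u e hu hfe d m, mul_one]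

end Segre

/-- Linear projection of the Segre variety `S = ℙ(V₁) × ⋯ × ℙ(Vₙ)` from the
projective span `L` of the union of the subvarieties
`𝒫_{ij} = ℙ(V₁) × ⋯ × H_i × ⋯ × H_j × ⋯ × ℙ(Vₙ)` (where `Hᵢ = {fᵢ = 0}`) is a
birational map onto `ℙ^{a₁ + ⋯ + aₙ}`.  Concretely, with `Λ` the affine cone
over `L` (the span of simple tensors with at least two coordinates in the
hyperplanes) and `F(v₁ ⊗ ⋯ ⊗ vₙ) = f₁(v₁)⋯fₙ(vₙ)`:
(1) `Λ` has codimension `1 + a₁ + ⋯ + aₙ`;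
(2) `Λ ⊆ ker F`;
(3) `([v₁],…,[vₙ]) ↦ [v₁ ⊗ ⋯ ⊗ vₙ mod Λ]` is a bijection from the chart
`{∀ i, fᵢ(vᵢ) ≠ 0}` of `∏ᵢ ℙ(Vᵢ)` onto the chart `{F̄ ≠ 0}` of `ℙ(V/Λ)`. -/
theorem segre_projection_birational (k : Type) [Field k]
    (n : ℕ) (hn : 1 ≤ n) (a : Fin n → ℕ) (ha : ∀ i, 1 ≤ a i)
    (V : Fin n → Type) [∀ i, AddCommGroup (V i)] [∀ i, Module k (V i)]
    [∀ i, FiniteDimensional k (V i)]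
    (hdim : ∀ i, finrank k (V i) = a i + 1)
    (f : ∀ i, V i →ₗ[k] k) (hf : ∀ i, f i ≠ 0)
    (Λ : Submodule k (⨂[k] i, V i))
    (hΛdef : Λ = Submodule.span k
      {w | ∃ v : ∀ i, V i,
        (∃ i j, i ≠ j ∧ f i (v i) = 0 ∧ f j (v j) = 0) ∧ w = ⨂ₜ[k] i, v i})
    (F : (⨂[k] i, V i) →ₗ[k] k)
    (hF : F = PiTensorProduct.lift
      ((MultilinearMap.mkPiAlgebra k (Fin n) k).compLinearMap f)) :
    -- (1) the codimension of `Λ` is `1 + a₁ + ⋯ + aₙ`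
    finrank k ((⨂[k] i, V i) ⧸ Λ) = 1 + ∑ i, a i ∧
    -- (2) `Λ ⊆ ker F`, so `F` descends to `F̄ = Λ.liftQ F _` on the quotient
    Λ ≤ LinearMap.ker F ∧
    -- (3) the projection is a bijection between the two charts
    ∀ hker : Λ ≤ LinearMap.ker F,
      ∃ e : {p : ∀ i, Projectivization k (V i) // ∀ i, f i ((p i).rep) ≠ 0} ≃
            {w : Projectivization k ((⨂[k] i, V i) ⧸ Λ) //
              Λ.liftQ F hker w.rep ≠ 0},
        ∀ (v : ∀ i, V i) (hv : ∀ i, f i (v i) ≠ 0) (hv0 : ∀ i, v i ≠ 0)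
          (hrep : ∀ i, f i ((Projectivization.mk k (v i) (hv0 i)).rep) ≠ 0)
          (hq0 : (Submodule.Quotient.mk (⨂ₜ[k] i, v i) : (⨂[k] i, V i) ⧸ Λ) ≠ 0),
          (e ⟨fun i => Projectivization.mk k (v i) (hv0 i), hrep⟩ : Projectivization k ((⨂[k] i, V i) ⧸ Λ)) =
            Projectivization.mk k
              (Submodule.Quotient.mk (⨂ₜ[k] i, v i) : (⨂[k] i, V i) ⧸ Λ) hq0 := by
  classical
  choose u e coord hu hfe hce hcu hrec using fun i => exists_adapted (hdim i) (f i) (hf i)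
  have hΛker : Λ = LinearMap.ker (SegrePhi f coord) := by
    rw [hΛdef]
    exact ker_SegrePhi_eq_span f u e coord hu hrec
  have hsurj : Function.Surjective (SegrePhi f coord) := by
    rintro ⟨c, g⟩
    exact ⟨SegreSec u e (c, g), SegrePhi_SegreSec f u e coord hu hfe hce hcu c g⟩
  have hFfst : ∀ t, F t = (SegrePhi f coord t).1 := by
    intro t
    rw [hF]
    rfl
  have hFtprod : ∀ v : ∀ i, V i, F (⨂ₜ[k] i, v i) = ∏ i, f i (v i) := by
    intro v
    rw [hF, lift.tprod]
    simp [MultilinearMap.mkPiAlgebra_apply]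
  have hker2 : Λ ≤ LinearMap.ker F := by
    intro t ht
    rw [hΛker, LinearMap.mem_ker] at ht
    rw [LinearMap.mem_ker, hFfst, ht]
    rfl
  refine ⟨?_, hker2, ?_⟩
  · have equot : ((⨂[k] i, V i) ⧸ Λ) ≃ₗ[k] (k × ∀ i, Fin (a i) → k) :=
      (Submodule.quotEquivOfEq Λ _ hΛker).trans
        (LinearMap.quotKerEquivOfSurjective _ hsurj)
    rw [equot.finrank_eq, Module.finrank_prod, finrank_self, Module.finrank_pi_fintype]
    congr 1
    refine Finset.sum_congr rfl fun i _ => ?_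
    rw [Module.finrank_pi, Fintype.card_fin]
  · intro hker
    set Phib : ((⨂[k] i, V i) ⧸ Λ) →ₗ[k] (k × ∀ i, Fin (a i) → k) :=
      Λ.liftQ (SegrePhi f coord) (le_of_eq hΛker) with hPhib
    have hPhibar_mk : ∀ t, Phib (Submodule.Quotient.mk t) = SegrePhi f coord t :=
      fun t => Submodule.liftQ_apply _ _ t
    have hPhib_inj : Function.Injective Phib := by
      intro x y hxy
      obtain ⟨t1, rfl⟩ := Submodule.Quotient.mk_surjective Λ x
      obtain ⟨t2, rfl⟩ := Submodule.Quotient.mk_surjective Λ y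
      rw [hPhibar_mk, hPhibar_mk] at hxy
      rw [Submodule.Quotient.eq, hΛker, LinearMap.mem_ker, map_sub, hxy, sub_self]
    have hFbar_mk : ∀ t, Λ.liftQ F hker (Submodule.Quotient.mk t) = F t :=
      fun t => Submodule.liftQ_apply _ _ t
    have hfst : ∀ q, Λ.liftQ F hker q = (Phib q).1 := by
      intro q
      obtain ⟨t, rfl⟩ := Submodule.Quotient.mk_surjective Λ q
      rw [hFbar_mk, hPhibar_mk]
      exact hFfst t
    have hQne : ∀ (v : ∀ i, V i), (∀ i, f i (v i) ≠ 0) →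
        (Submodule.Quotient.mk (⨂ₜ[k] i, v i) : (⨂[k] i, V i) ⧸ Λ) ≠ 0 := by
      intro v hv h0
      have h1 : Λ.liftQ F hker (Submodule.Quotient.mk (⨂ₜ[k] i, v i)
          : (⨂[k] i, V i) ⧸ Λ) = 0 := by rw [h0, map_zero]
      rw [hFbar_mk, hFtprod] at h1
      exact Finset.prod_ne_zero_iff.2 (fun i _ => hv i) h1
    have hQchart : ∀ (v : ∀ i, V i) (hv : ∀ i, f i (v i) ≠ 0),
        Λ.liftQ F hker (Projectivization.mk k
          (Submodule.Quotient.mk (⨂ₜ[k] i, v i) : (⨂[k] i, V i) ⧸ Λ)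
          (hQne v hv)).rep ≠ 0 := by
      intro v hv
      rw [chart_mk_iff (k := k), hFbar_mk, hFtprod]
      exact Finset.prod_ne_zero_iff.2 fun i _ => hv i
    have hvee_ne : ∀ (d : ∀ i, Fin (a i) → k) (i : Fin n),
        (u i + ∑ j, d i j • e i j) ≠ 0 := by
      intro d i h0
      have h1 := f_reconstruct f u e hu hfe d i
      rw [h0, map_zero] at h1
      exact zero_ne_one h1
    have hvee_chart : ∀ (d : ∀ i, Fin (a i) → k) (i : Fin n),
        f i ((Projectivization.mk k (u i + ∑ j, d i j • e i j) (hvee_ne d i)).rep) ≠ 0 := by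
      intro d i
      rw [chart_mk_iff (k := k), f_reconstruct f u e hu hfe]
      exact one_ne_zero
    have hkey : ∀ (q : (⨂[k] i, V i) ⧸ Λ), (Phib q).1 ≠ 0 →
        (Submodule.Quotient.mk
            (⨂ₜ[k] i, (u i + ∑ j, ((Phib q).2 i j / (Phib q).1) • e i j))
          : (⨂[k] i, V i) ⧸ Λ) = ((Phib q).1)⁻¹ • q := by
      intro q hq
      apply hPhib_inj
      have h2 : SegrePhi f coord
          (⨂ₜ[k] i, (u i + ∑ j, ((Phib q).2 i j / (Phib q).1) • e i j))
          = (1, fun i j => (Phib q).2 i j / (Phib q).1) :=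
        SegrePhi_reconstruct f u e coord hu hfe hce hcu _
      rw [hPhibar_mk, h2, map_smul]
      refine Prod.ext ?_ ?_
      · simp [inv_mul_cancel₀ hq]
      · funext i j
        simp [div_eq_inv_mul]
    have hmk_tprod_rep : ∀ (v : ∀ i, V i) (hv0 : ∀ i, v i ≠ 0)
        (h1 : (Submodule.Quotient.mk (⨂ₜ[k] i, (Projectivization.mk k (v i) (hv0 i)).rep)
            : (⨂[k] i, V i) ⧸ Λ) ≠ 0)
        (h2 : (Submodule.Quotient.mk (⨂ₜ[k] i, v i) : (⨂[k] i, V i) ⧸ Λ) ≠ 0),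
        Projectivization.mk k (Submodule.Quotient.mk
            (⨂ₜ[k] i, (Projectivization.mk k (v i) (hv0 i)).rep)
          : (⨂[k] i, V i) ⧸ Λ) h1
          = Projectivization.mk k (Submodule.Quotient.mk (⨂ₜ[k] i, v i)
            : (⨂[k] i, V i) ⧸ Λ) h2 := by
      intro v hv0 h1 h2
      choose d hd using fun i => exists_rep_smul (k := k) (v i) (hv0 i)
      have ht : (⨂ₜ[k] i, (Projectivization.mk k (v i) (hv0 i)).rep)
          = (∏ i, (d i : k)) • ⨂ₜ[k] i, v i := by
        have h3 : (⨂ₜ[k] i, (Projectivization.mk k (v i) (hv0 i)).rep)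
            = ⨂ₜ[k] i, ((d i : k) • v i) :=
          congrArg (PiTensorProduct.tprod k) (funext fun i => by rw [hd i, Units.smul_def])
        rw [h3, (PiTensorProduct.tprod k).map_smul_univ]
      refine (Projectivization.mk_eq_mk_iff' k _ _ _ _).2 ⟨∏ i, (d i : k), ?_⟩
      rw [← Submodule.Quotient.mk_smul, ← ht]
    refine ⟨⟨fun p => ⟨Projectivization.mk k (Submodule.Quotient.mk
          (⨂ₜ[k] i, ((p.1 i).rep)) : (⨂[k] i, V i) ⧸ Λ) (hQne _ p.2), hQchart _ p.2⟩,
        fun w => ⟨fun i => Projectivization.mk k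
          (u i + ∑ j, ((Phib w.1.rep).2 i j / (Phib w.1.rep).1) • e i j)
          (hvee_ne (fun i j => (Phib w.1.rep).2 i j / (Phib w.1.rep).1) i),
          fun i => hvee_chart (fun i j => (Phib w.1.rep).2 i j / (Phib w.1.rep).1) i⟩,
        ?_, ?_⟩, ?_⟩
    · -- left inverse
      rintro ⟨P, hP⟩
      apply Subtype.ext
      funext i
      dsimp only
      set r : ∀ i, V i := fun i => (P i).rep with hr
      set q : (⨂[k] i, V i) ⧸ Λ := (Projectivization.mk k (Submodule.Quotient.mk
          (⨂ₜ[k] i, r i) : (⨂[k] i, V i) ⧸ Λ) (hQne r hP)).rep with hqdef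
      obtain ⟨δ, hδ⟩ := exists_rep_smul (k := k)
        (Submodule.Quotient.mk (⨂ₜ[k] i, r i) : (⨂[k] i, V i) ⧸ Λ) (hQne r hP)
      have hq : Phib q = (δ : k) • SegrePhi f coord (⨂ₜ[k] i, r i) := by
        rw [hqdef, hδ, Units.smul_def, map_smul, hPhibar_mk]
      have hfr : ∀ m, f m (r m) ≠ 0 := hP
      have herase : ∀ i : Fin n, (∏ m ∈ Finset.univ.erase i, f m (r m)) ≠ 0 :=
        fun i => Finset.prod_ne_zero_iff.2 fun m _ => hfr m
      have hratio : ∀ j, (Phib q).2 i j / (Phib q).1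
          = (f i (r i))⁻¹ * coord i (r i) j := by
        intro j
        rw [hq, SegrePhi_tprod]
        simp only [Prod.smul_snd, Prod.smul_fst, Pi.smul_apply, Units.smul_def, smul_eq_mul]
        rw [show (∏ m, f m (r m)) = f i (r i) * ∏ m ∈ Finset.univ.erase i, f m (r m) from
          (Finset.mul_prod_erase _ _ (Finset.mem_univ i)).symm]
        have hd0 : (δ : k) ≠ 0 := δ.ne_zero
        have hE : (∏ m ∈ Finset.univ.erase i, f m (r m)) ≠ 0 := herase i
        have hfri : f i (r i) ≠ 0 := hfr i
        field_simp
      have h3 := congrArg (fun z => (f i (r i))⁻¹ • z) (hrec i (r i))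
      rw [smul_add, inv_smul_smul₀ (hfr i), Finset.smul_sum] at h3
      simp only [smul_smul] at h3
      rw [← Projectivization.mk_rep (P i)]
      refine (Projectivization.mk_eq_mk_iff' k _ _ _ _).2 ⟨(f i (r i))⁻¹, ?_⟩
      rw [h3]
      congr 1
      refine Finset.sum_congr rfl fun j _ => ?_
      rw [hratio j]
    · -- right inverse
      rintro ⟨w, hw⟩
      apply Subtype.ext
      dsimp only
      have hc : (Phib w.rep).1 ≠ 0 := by
        rw [← hfst]
        exact hw
      rw [hmk_tprod_rep _ _ _ (hQne _ (fun i => by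
        have h1 : f i (u i + ∑ j, ((Phib w.rep).2 i j / (Phib w.rep).1) • e i j) = 1 :=
          f_reconstruct f u e hu hfe
            (fun i j => (Phib w.rep).2 i j / (Phib w.rep).1) i
        rw [h1]
        exact one_ne_zero))]
      refine Eq.trans ?_ (Projectivization.mk_rep w)
      exact (Projectivization.mk_eq_mk_iff' k _ _ _ (Projectivization.rep_nonzero w)).2
        ⟨((Phib w.rep).1)⁻¹, (hkey w.rep hc).symm⟩
    · intro v hv hv0 hrep hq0
      exact hmk_tprod_rep v hv0 _ hq0
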